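/- Let f : 2^U → ℝ≥0 be submodular (not necessarily monotone), τ > 0, ε ∈ (0,1), g ≥ 1, and suppose OPT ⊆ U satisfies f(OPT) ≥ τ and |OPT| ≤ g. Let S_1,...,S_m with m = ⌈2/ε⌉ be disjoint subsets of U such that every element o ∈ OPT \ (∪_i S_i) satisfies f(S_t ∪ {o}) − f(S_t) < ετ/(2g) for every t (at the time considered, i.e., by submodularity also f(S_t ∪ OPT_1 ∪ {o}) − f(S_t ∪ OPT_1) < ετ/(2g) where OPT_1 = OPT ∩ (∪_i S_i)). Assume additionally |S_t| < 2g/ε for all t. Then there exists t such that f(S_t ∪ OPT_1) ≥ (1 − ε)τ. -/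

import Mathlib

private lemma dim_ret {U : Type*} [DecidableEq U] (f : Finset U → ℝ)
    (hsub : ∀ A B : Finset U, A ⊆ B → ∀ x ∉ B,
      f (insert x B) - f B ≤ f (insert x A) - f A)
    (A B : Finset U) (hAB : A ⊆ B) (C : Finset U) :
    Disjoint C B → f (B ∪ C) - f B ≤ f (A ∪ C) - f A := by
  induction C using Finset.induction_on with
  | empty => simp
  | @insert x C hx ih =>
    intro hd
    have hxB : x ∉ B := (Finset.disjoint_left.1 hd) (Finset.mem_insert_self x C)
    have hCB : Disjoint C B := hd.mono_left (Finset.subset_insert x C)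
    have hxBC : x ∉ B ∪ C := by
      simp only [Finset.mem_union]
      push_neg
      exact ⟨hxB, hx⟩
    have key := hsub (A ∪ C) (B ∪ C) (Finset.union_subset_union hAB le_rfl) x hxBC
    have ih' := ih hCB
    rw [Finset.union_insert, Finset.union_insert]
    linarith

private lemma marg_sum {U : Type*} [DecidableEq U] (f : Finset U → ℝ)
    (hsub : ∀ A B : Finset U, A ⊆ B → ∀ x ∉ B,
      f (insert x B) - f B ≤ f (insert x A) - f A)
    (A : Finset U) (C : Finset U) :
    Disjoint C A → f (A ∪ C) - f A ≤ ∑ x ∈ C, (f (insert x A) - f A) := by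
  induction C using Finset.induction_on with
  | empty => simp
  | @insert x C hx ih =>
    intro hd
    have hxA : x ∉ A := (Finset.disjoint_left.1 hd) (Finset.mem_insert_self x C)
    have hCA : Disjoint C A := hd.mono_left (Finset.subset_insert x C)
    have hxAC : x ∉ A ∪ C := by
      simp only [Finset.mem_union]; push_neg; exact ⟨hxA, hx⟩
    have key := hsub A (A ∪ C) Finset.subset_union_left x hxAC
    have ih' := ih hCA
    rw [Finset.union_insert, Finset.sum_insert hx]
    linarith

theorem stmt_12 {U : Type*} [DecidableEq U] (f : Finset U → ℝ)
    (hnn : ∀ X : Finset U, 0 ≤ f X)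
    (hsub : ∀ A B : Finset U, A ⊆ B → ∀ x ∉ B,
      f (insert x B) - f B ≤ f (insert x A) - f A)
    (τ ε g : ℝ) (hτ : 0 < τ) (hε : ε ∈ Set.Ioo (0 : ℝ) 1) (hg : 1 ≤ g)
    (OPT : Finset U) (hOPT : τ ≤ f OPT) (hOPTcard : (OPT.card : ℝ) ≤ g)
    (m : ℕ) (hm : m = ⌈(2 : ℝ) / ε⌉₊)
    (S : Fin m → Finset U)
    (hdisj : ∀ i j : Fin m, i ≠ j → Disjoint (S i) (S j))
    (hsize : ∀ t : Fin m, (S t).card < 2 * g / ε)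
    (hthresh : ∀ o ∈ OPT, o ∉ Finset.univ.biUnion S → ∀ t : Fin m,
      f (insert o (S t)) - f (S t) < ε * τ / (2 * g)) :
    ∃ t : Fin m, (1 - ε) * τ ≤ f (S t ∪ (OPT ∩ Finset.univ.biUnion S)) := by
  obtain ⟨hε0, hε1⟩ := hε
  set T := Finset.univ.biUnion S with hT
  set B := OPT with hB
  -- Claim L3: sum of marginals over disjoint blocks dominates the total marginal
  have L3 : ∀ s : Finset (Fin m),
      f (B ∪ s.biUnion S) - f B ≤ ∑ i ∈ s, (f (B ∪ S i) - f B) := by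
    intro s
    induction s using Finset.induction_on with
    | empty => simp
    | @insert j s hj ih =>
      rw [Finset.biUnion_insert, Finset.sum_insert hj]
      set X := s.biUnion S with hX
      have hdisjX : Disjoint (S j \ B) (B ∪ X) := by
        rw [Finset.disjoint_union_right]
        constructor
        · exact Finset.sdiff_disjoint
        · apply Finset.disjoint_of_subset_left (Finset.sdiff_subset)
          rw [hX, Finset.disjoint_biUnion_right]
          intro i hi
          exact hdisj j i (fun h => hj (h ▸ hi))
      have key := dim_ret f hsub B (B ∪ X) Finset.subset_union_left (S j \ B) hdisjX
      have e1 : (B ∪ X) ∪ (S j \ B) = B ∪ (S j ∪ X) := by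
        ext x; simp only [Finset.mem_union, Finset.mem_sdiff]; tauto
      have e2 : B ∪ (S j \ B) = B ∪ S j := by
        ext x; simp only [Finset.mem_union, Finset.mem_sdiff]; tauto
      rw [e1, e2] at key
      linarith
  -- Step 2: find a good t
  have hm1 : 1 ≤ m := by
    rw [hm]
    have : (0:ℝ) < 2 / ε := by positivity
    exact Nat.one_le_iff_ne_zero.mpr (by positivity)
  have hmpos : (0:ℝ) < (m:ℝ) := by exact_mod_cast hm1
  have hTuniv : Finset.univ.biUnion S = T := rfl
  have hsum : (-(f B)) ≤ ∑ i : Fin m, (f (B ∪ S i) - f B) := by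
    have := L3 Finset.univ
    have := hnn (B ∪ Finset.univ.biUnion S)
    linarith
  have hne : (Finset.univ : Finset (Fin m)).Nonempty := by
    rw [Finset.univ_nonempty_iff]
    exact Fin.pos_iff_nonempty.mp (by omega)
  obtain ⟨t, -, ht⟩ := Finset.exists_le_of_sum_le
      (f := fun _ : Fin m => -(f B) / (m:ℝ))
      (g := fun i => f (B ∪ S i) - f B) hne (by
    rw [Finset.sum_const, Finset.card_univ, Fintype.card_fin, nsmul_eq_mul]
    calc (m:ℝ) * (-(f B) / m) = -(f B) := by field_simp
    _ ≤ ∑ i : Fin m, (f (B ∪ S i) - f B) := hsum)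
  -- ht : -(f B) / m ≤ f (B ∪ S t) - f B
  have hinvm : 1 / (m:ℝ) ≤ ε / 2 := by
    rw [div_le_div_iff₀ hmpos (by norm_num : (0:ℝ) < 2)]
    have h1 : (2:ℝ) / ε ≤ (m:ℝ) := by rw [hm]; exact Nat.le_ceil _
    rw [div_le_iff₀ hε0] at h1
    linarith
  have hfB : (0:ℝ) ≤ f B := hnn B
  have step2 : (1 - ε/2) * τ ≤ f (B ∪ S t) := by
    have h1 : (1 - 1/(m:ℝ)) * f B ≤ f (B ∪ S t) := by
      have : f B - f B / m ≤ f (B ∪ S t) := by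
        rw [neg_div] at ht; linarith
      rw [sub_mul, one_mul, div_mul_eq_mul_div, one_mul]
      linarith [this]
    have h2 : (1 - ε/2) * τ ≤ (1 - 1/(m:ℝ)) * f B := by
      have ha : (1 - ε/2) ≤ (1 - 1/(m:ℝ)) := by linarith
      have hb : (0:ℝ) ≤ 1 - ε/2 := by linarith
      calc (1 - ε/2) * τ ≤ (1 - ε/2) * f B :=
            mul_le_mul_of_nonneg_left hOPT hb
        _ ≤ (1 - 1/(m:ℝ)) * f B := mul_le_mul_of_nonneg_right ha hfB
    linarith
  -- Step 3
  refine ⟨t, ?_⟩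
  set O1 := OPT ∩ T with hO1
  set O2 := OPT \ T with hO2
  have hSt : S t ⊆ T := by
    intro x hx
    exact Finset.mem_biUnion.mpr ⟨t, Finset.mem_univ t, hx⟩
  have hO2disj : Disjoint O2 (S t ∪ O1) := by
    rw [Finset.disjoint_union_right]
    constructor
    · exact Finset.disjoint_of_subset_right hSt Finset.sdiff_disjoint
    · exact Finset.disjoint_of_subset_right Finset.inter_subset_right
        Finset.sdiff_disjoint
  have eU : (S t ∪ O1) ∪ O2 = B ∪ S t := by
    ext x
    simp only [hO1, hO2, hB, Finset.mem_union, Finset.mem_inter, Finset.mem_sdiff]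
    constructor
    · rintro ((h | ⟨h1, h2⟩) | ⟨h1, h2⟩) <;> tauto
    · rintro (h | h)
      · by_cases hxT : x ∈ T <;> tauto
      · tauto
  have hms := marg_sum f hsub (S t ∪ O1) O2 hO2disj
  rw [eU] at hms
  have hbound : ∑ x ∈ O2, (f (insert x (S t ∪ O1)) - f (S t ∪ O1))
      ≤ (O2.card : ℝ) * (ε * τ / (2 * g)) := by
    rw [← nsmul_eq_mul]
    apply Finset.sum_le_card_nsmul
    intro x hx
    simp only [hO2, Finset.mem_sdiff] at hx
    have hxO : x ∈ OPT := hx.1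
    have hxT : x ∉ T := hx.2
    have hxSt : x ∉ S t ∪ O1 := by
      simp only [Finset.mem_union, hO1, Finset.mem_inter]
      push_neg
      exact ⟨fun h => hxT (hSt h), fun _ => hxT⟩
    have h1 := hsub (S t) (S t ∪ O1) Finset.subset_union_left x hxSt
    have h2 := hthresh x hxO hxT t
    linarith
  have hcard2 : (O2.card : ℝ) ≤ g := by
    have : O2.card ≤ OPT.card := Finset.card_le_card Finset.sdiff_subset
    have : (O2.card : ℝ) ≤ (OPT.card : ℝ) := by exact_mod_cast this
    linarith
  have hfrac : (0:ℝ) < ε * τ / (2 * g) := by positivity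
  have hb2 : (O2.card : ℝ) * (ε * τ / (2 * g)) ≤ ε * τ / 2 := by
    calc (O2.card : ℝ) * (ε * τ / (2 * g)) ≤ g * (ε * τ / (2 * g)) :=
          mul_le_mul_of_nonneg_right hcard2 (le_of_lt hfrac)
      _ = ε * τ / 2 := by field_simp
  -- conclude
  have : f (B ∪ S t) - f (S t ∪ O1) ≤ ε * τ / 2 := by linarith
  linarith [step2]
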